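/- For n = sm+1 with s, m ≥ 20, the family W(m,s) = {W ⊆ [n] : |W ∩ [sm-1]| ≥ m} satisfies ν(W(m,s)) = s-1 and |W(m,s)| > |P(s,m,s-1)|, where P(s,m,s-1) = {P ⊆ [n] : |P| + |P ∩ [s-2]| ≥ m+1}. In particular, P(s,m,l) is not extremal for l = s-1. -/

import Mathlib

/-- The family `F` contains `s` pairwise disjoint members. -/
def HasMatching {n : ℕ} (F : Finset (Finset (Fin n))) (s : ℕ) : Prop :=
  ∃ 𝒜 : Finset (Finset (Fin n)), 𝒜 ⊆ F ∧ 𝒜.card = s ∧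
    (𝒜 : Set (Finset (Fin n))).Pairwise Disjoint

/-- The family `W(m,s) = {W ⊆ [n] : |W ∩ [sm-1]| ≥ m}` for `n = sm+1`. -/
def Wfam (n m s : ℕ) : Finset (Finset (Fin n)) :=
  Finset.univ.filter fun W => m ≤ (W.filter fun x => x.val < s * m - 1).card

/-- The family `P(s,m,l) = {P ⊆ [n] : |P| + |P ∩ [l-1]| ≥ m+1}`. -/
def Pfam (n m l : ℕ) : Finset (Finset (Fin n)) :=
  Finset.univ.filter fun P =>
    m + 1 ≤ P.card + (P.filter fun x => x.val < l - 1).card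

lemma card_filter_Ico (n a b : ℕ) (hb : b ≤ n) :
    (Finset.univ.filter fun x : Fin n => a ≤ x.val ∧ x.val < b).card = b - a := by
  rw [← Nat.card_Ico a b]
  apply Finset.card_bij (fun (x : Fin n) _ => x.val)
  · intro x hx
    simp only [Finset.mem_filter, Finset.mem_univ, true_and] at hx
    simp [Finset.mem_Ico, hx.1, hx.2]
  · intro x _ y _ h
    exact Fin.val_injective h
  · intro v hv
    simp only [Finset.mem_Ico] at hv
    exact ⟨⟨v, lt_of_lt_of_le hv.2 hb⟩, by simp [hv.1, hv.2], rfl⟩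

lemma sum_two_pow (n : ℕ) : ∑ i ∈ Finset.range n, 2^i = 2^n - 1 := by
  induction n with
  | zero => simp
  | succ k ih => rw [Finset.sum_range_succ, ih]; have := Nat.one_le_two_pow (n := k); omega

lemma two_pow_le_factorial (k : ℕ) : 2^k ≤ (k+1).factorial := by
  induction k with
  | zero => simp
  | succ k ih =>
    rw [pow_succ, Nat.factorial_succ]
    calc 2^k * 2 ≤ (k+1).factorial * 2 := Nat.mul_le_mul_right 2 ih
    _ ≤ (k+1).factorial * (k+2) := Nat.mul_le_mul_left _ (by omega)
    _ = (k+2) * (k+1).factorial := Nat.mul_comm _ _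

lemma succ_pow_lt_three_mul (t e : ℕ) (ht : 1 ≤ t) (he : e ≤ t) :
    (t+1)^e < 3 * t^e := by
  have htpos : 0 < t^e := Nat.pow_pos ht
  have h2pos : 0 < 2^e := Nat.pow_pos (by norm_num)
  rw [← Nat.mul_lt_mul_left h2pos]
  have hexp : ∑ k ∈ Finset.range (e+1), t^(e-k) * (e.choose k) = (t+1)^e := by
    have := add_pow (1 : ℕ) t e
    simpa [one_pow, add_comm] using this.symm
  rw [← hexp, Finset.mul_sum, Finset.sum_range_succ']
  have hterm : ∀ k ∈ Finset.range e, 2^e * (t^(e-(k+1)) * (e.choose (k+1))) ≤ 2^(e-k) * t^e := by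
    intro k hk
    rw [Finset.mem_range] at hk
    have h1 : 2^k * (e.choose (k+1)) ≤ t^(k+1) := by
      calc 2^k * (e.choose (k+1)) ≤ (k+1).factorial * (e.choose (k+1)) :=
            Nat.mul_le_mul_right _ (two_pow_le_factorial k)
      _ = e.descFactorial (k+1) := (Nat.descFactorial_eq_factorial_mul_choose e (k+1)).symm
      _ ≤ e^(k+1) := Nat.descFactorial_le_pow e (k+1)
      _ ≤ t^(k+1) := Nat.pow_le_pow_left he (k+1)
    have h2 : 2^e = 2^(e-k) * 2^k := by
      rw [← pow_add]; congr 1; omega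
    have h3 : t^(k+1) * t^(e-(k+1)) = t^e := by
      rw [← pow_add]; congr 1; omega
    calc 2^e * (t^(e-(k+1)) * (e.choose (k+1)))
        = 2^(e-k) * ((2^k * (e.choose (k+1))) * t^(e-(k+1))) := by rw [h2]; ring
      _ ≤ 2^(e-k) * (t^(k+1) * t^(e-(k+1))) :=
          Nat.mul_le_mul_left _ (Nat.mul_le_mul_right _ h1)
      _ = 2^(e-k) * t^e := by rw [h3]
  have hsum : ∑ k ∈ Finset.range e, 2^e * (t^(e-(k+1)) * (e.choose (k+1)))
      ≤ ∑ k ∈ Finset.range e, 2^(e-k) * t^e := Finset.sum_le_sum hterm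
  have hgeo : ∑ k ∈ Finset.range e, 2^(e-k) * t^e ≤ (2*(2^e - 1)) * t^e := by
    rw [← Finset.sum_mul]
    apply Nat.mul_le_mul_right
    have : ∑ k ∈ Finset.range e, 2^(e-k) = ∑ k ∈ Finset.range e, 2^(k+1) := by
      rw [← Finset.sum_range_reflect]
      apply Finset.sum_congr rfl
      intro i hi; rw [Finset.mem_range] at hi; congr 1; omega
    rw [this]
    have : ∑ k ∈ Finset.range e, 2^(k+1) = 2 * ∑ k ∈ Finset.range e, 2^k := by
      rw [Finset.mul_sum]; apply Finset.sum_congr rfl; intro i _; rw [pow_succ]; ring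
    rw [this, sum_two_pow]
  have hone := Nat.one_le_two_pow (n := e)
  calc (∑ k ∈ Finset.range e, 2^e * (t^(e-(k+1)) * (e.choose (k+1))))
        + 2^e * (t^(e-0) * (e.choose 0))
      ≤ (2*(2^e - 1)) * t^e + 2^e * t^e := by
        refine Nat.add_le_add (hsum.trans hgeo) (le_of_eq ?_)
        simp
    _ = (2*(2^e - 1) + 2^e) * t^e := by rw [Nat.add_mul]
    _ ≤ (3*2^e - 2) * t^e := Nat.mul_le_mul_right _ (by omega)
    _ < (3*2^e) * t^e := (Nat.mul_lt_mul_right htpos).mpr (by omega)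
    _ = 2^e * (3 * t^e) := by ring

section
variable {s m : ℕ} (hs : 20 ≤ s) (hm : 20 ≤ m)

-- ratio lemma: (s-1) * C(M,k) ≤ C(M,k+1) for k+2 ≤ m, where M = s*m - s + 1
lemma ratio_lemma (hs : 20 ≤ s) (hm : 20 ≤ m) {k : ℕ} (hk : k + 2 ≤ m) :
    (s-1) * (s*m - s + 1).choose k ≤ (s*m - s + 1).choose (k+1) := by
  set M := s*m - s + 1 with hM
  have key : (s-1)*(k+1) ≤ M - k := by
    have h3 : s*(k+2) ≤ s*m := Nat.mul_le_mul_left s hk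
    have h2 : s*(k+2) = s*(k+1) + s := by ring
    have h4 : (s-1)*(k+1) = s*(k+1) - (k+1) := by rw [Nat.sub_one_mul]
    have h5 : k+1 ≤ s*(k+1) := Nat.le_mul_of_pos_left _ (by omega)
    have h6 : s ≤ s*m := Nat.le_mul_of_pos_right s (by omega)
    omega
  have h := Nat.choose_succ_right_eq M k
  have h1 : M.choose k * ((s-1)*(k+1)) ≤ M.choose k * (M - k) :=
    Nat.mul_le_mul_left _ key
  rw [← h] at h1
  have h2 : M.choose k * ((s-1)*(k+1)) = ((s-1) * M.choose k) * (k+1) := by ring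
  rw [h2] at h1
  exact Nat.le_of_mul_le_mul_right h1 (by omega)

lemma ratio_pow (hs : 20 ≤ s) (hm : 20 ≤ m) :
    ∀ a ≤ m - 1, (s-1)^a * (s*m - s + 1).choose (m-1-a) ≤ (s*m - s + 1).choose (m-1) := by
  intro a
  induction a with
  | zero => intro _; simp
  | succ b ih =>
    intro hb
    have hb' : b ≤ m - 1 := by omega
    have step : (s-1) * (s*m - s + 1).choose (m-1-(b+1)) ≤ (s*m - s + 1).choose (m-1-b) := by
      have e1 : m-1-(b+1)+1 = m-1-b := by omega
      have e2 : m-1-(b+1)+2 ≤ m := by omega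
      have := ratio_lemma hs hm (k := m-1-(b+1)) e2
      rwa [e1] at this
    calc (s-1)^(b+1) * (s*m - s + 1).choose (m-1-(b+1))
        = (s-1)^b * ((s-1) * (s*m - s + 1).choose (m-1-(b+1))) := by ring
      _ ≤ (s-1)^b * (s*m - s + 1).choose (m-1-b) := Nat.mul_le_mul_left _ step
      _ ≤ (s*m - s + 1).choose (m-1) := ih hb'

-- partial sums of powerset cards
lemma powerset_card_le_bound {α : Type*} [DecidableEq α] (Z : Finset α)
    (hs : 20 ≤ s) (hm : 20 ≤ m) (hZ : Z.card = s*m - s + 1) :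
    ∀ k ≤ m - 1, 18 * (Z.powerset.filter fun C => C.card ≤ k).card
      ≤ 19 * (s*m - s + 1).choose k := by
  intro k
  induction k with
  | zero =>
    intro _
    have : (Z.powerset.filter fun C => C.card ≤ 0) = {∅} := by
      ext C
      simp only [Finset.mem_filter, Finset.mem_powerset, Finset.mem_singleton,
        Nat.le_zero, Finset.card_eq_zero]
      constructor
      · rintro ⟨_, h⟩; exact h
      · rintro rfl; simp
    rw [this]; simp
  | succ k ih =>
    intro hk
    have hk' : k ≤ m - 1 := by omega
    have hsplit : (Z.powerset.filter fun C => C.card ≤ k+1)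
        = (Z.powerset.filter fun C => C.card ≤ k) ∪ (Z.powerset.filter fun C => C.card = k+1) := by
      ext C
      simp only [Finset.mem_filter, Finset.mem_powerset, Finset.mem_union]
      constructor
      · rintro ⟨h1, h2⟩
        rcases Nat.lt_or_ge C.card (k+1) with h | h
        · exact Or.inl ⟨h1, by omega⟩
        · exact Or.inr ⟨h1, by omega⟩
      · rintro (⟨h1, h2⟩ | ⟨h1, h2⟩) <;> exact ⟨h1, by omega⟩
    have hdisj : Disjoint (Z.powerset.filter fun C => C.card ≤ k)
        (Z.powerset.filter fun C => C.card = k+1) := by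
      rw [Finset.disjoint_left]
      intro C h1 h2
      simp only [Finset.mem_filter] at h1 h2
      omega
    have hcard2 : (Z.powerset.filter fun C => C.card = k+1).card = (s*m - s + 1).choose (k+1) := by
      rw [← Finset.powersetCard_eq_filter, Finset.card_powersetCard, hZ]
    rw [hsplit, Finset.card_union_of_disjoint hdisj, Nat.mul_add, hcard2]
    have hstep : 19 * (s*m - s + 1).choose k ≤ (s*m - s + 1).choose (k+1) := by
      calc 19 * (s*m - s + 1).choose k ≤ (s-1) * (s*m - s + 1).choose k :=
            Nat.mul_le_mul_right _ (by omega)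
        _ ≤ (s*m - s + 1).choose (k+1) := ratio_lemma hs hm (by omega)
    calc 18 * (Z.powerset.filter fun C => C.card ≤ k).card + 18 * (s*m - s + 1).choose (k+1)
        ≤ 19 * (s*m - s + 1).choose k + 18 * (s*m - s + 1).choose (k+1) :=
          Nat.add_le_add_right (ih hk') _
      _ ≤ (s*m - s + 1).choose (k+1) + 18 * (s*m - s + 1).choose (k+1) :=
          Nat.add_le_add_right hstep _
      _ = 19 * (s*m - s + 1).choose (k+1) := by ring

end

lemma PW_card_lt (s m : ℕ) (hs : 20 ≤ s) (hm : 20 ≤ m) :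
    ((Pfam (s*m+1) m (s-1)) \ (Wfam (s*m+1) m s)).card < (s*m - s + 1).choose m := by
  have hsm : 400 ≤ s*m := Nat.mul_le_mul hs hm
  have hs' : 20*s ≤ s*m := by
    have := Nat.mul_le_mul_left s hm
    omega
  have hm' : 20*m ≤ s*m := Nat.mul_le_mul_right m hs
  set n := s*m+1 with hn
  set M := s*m - s + 1 with hMdef
  -- predicates
  set pY : Fin n → Prop := fun x => x.val < s - 1 - 1 with hpY
  set pZ : Fin n → Prop := fun x => s - 1 - 1 ≤ x.val ∧ x.val < s*m - 1 with hpZ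
  set pE : Fin n → Prop := fun x => s*m - 1 ≤ x.val ∧ x.val < s*m + 1 with hpE
  set px : Fin n → Prop := fun x => x.val < s*m - 1 with hpx
  set D := (Pfam n m (s-1)) \ (Wfam n m s) with hD
  -- basic facts about members of D
  have hmemD : ∀ P ∈ D, (P.filter pY).card + (P.filter pZ).card ≤ m - 1 := by
    intro P hP
    rw [hD, Finset.mem_sdiff] at hP
    obtain ⟨hP1, hP2⟩ := hP
    rw [Pfam, Finset.mem_filter] at hP1
    rw [Wfam, Finset.mem_filter] at hP2
    have hW : (P.filter px).card ≤ m - 1 := by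
      have : ¬ (m ≤ (P.filter px).card) := by
        intro h; exact hP2 ⟨Finset.mem_univ P, h⟩
      omega
    have hsub : (P.filter pY) ∪ (P.filter pZ) ⊆ P.filter px := by
      intro x hx
      rw [Finset.mem_union, Finset.mem_filter, Finset.mem_filter] at hx
      rw [Finset.mem_filter]
      rcases hx with ⟨h1, h2⟩ | ⟨h1, h2⟩
      · exact ⟨h1, by simp only [hpx]; omega⟩
      · exact ⟨h1, by simp only [hpx]; omega⟩
    have hdisj : Disjoint (P.filter pY) (P.filter pZ) := by
      rw [Finset.disjoint_left]
      intro x h1 h2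
      rw [Finset.mem_filter] at h1 h2
      simp only [hpY] at h1
      simp only [hpZ] at h2
      omega
    have := Finset.card_le_card hsub
    rw [Finset.card_union_of_disjoint hdisj] at this
    omega
  -- fiberwise decomposition
  have hfiber : D.card = ∑ a ∈ Finset.range m,
      (D.filter fun P => (P.filter pY).card = a).card := by
    apply Finset.card_eq_sum_card_fiberwise
    intro P hP
    simp only [Finset.coe_range, Set.mem_Iio]
    have := hmemD P hP
    omega
  -- cards of the three blocks
  have hYcard : (Finset.univ.filter pY).card = s - 2 := by
    have h := card_filter_Ico n 0 (s-1-1) (by omega)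
    have heq : (Finset.univ.filter fun x : Fin n => 0 ≤ x.val ∧ x.val < s-1-1)
        = Finset.univ.filter pY := by
      apply Finset.filter_congr; intro x _; simp [hpY]
    rw [heq] at h
    rw [h]; omega
  have hZcard : (Finset.univ.filter pZ).card = M := by
    have h := card_filter_Ico n (s-1-1) (s*m-1) (by omega)
    rw [hpZ] at *
    rw [h]; omega
  have hEcard : (Finset.univ.filter pE).card = 2 := by
    have h := card_filter_Ico n (s*m-1) (s*m+1) (by omega)
    rw [hpE] at *
    rw [h]; omega
  -- per-fiber injection bound
  have hfibBound : ∀ a ∈ Finset.range m,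
      (D.filter fun P => (P.filter pY).card = a).card
        ≤ (s-2).choose a * (((Finset.univ.filter pZ).powerset.filter
            fun C => C.card ≤ m-1-a).card * 4) := by
    intro a ha
    rw [Finset.mem_range] at ha
    set T := ((Finset.univ.filter pY).powersetCard a) ×ˢ
      (((Finset.univ.filter pZ).powerset.filter fun C => C.card ≤ m-1-a) ×ˢ
        (Finset.univ.filter pE).powerset) with hT
    have hle : (D.filter fun P => (P.filter pY).card = a).card ≤ T.card := by
      apply Finset.card_le_card_of_injOn
        (fun P => (P.filter pY, (P.filter pZ, P.filter pE)))
      · intro P hP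
        rw [Finset.mem_coe, Finset.mem_filter] at hP
        obtain ⟨hPD, hPa⟩ := hP
        have hc := hmemD P hPD
        rw [hT]
        simp only [Finset.mem_coe, Finset.mem_product, Finset.mem_powersetCard, Finset.mem_filter,
          Finset.mem_powerset]
        refine ⟨⟨Finset.filter_subset_filter pY (Finset.subset_univ P), hPa⟩,
          ⟨Finset.filter_subset_filter pZ (Finset.subset_univ P), by omega⟩,
          Finset.filter_subset_filter pE (Finset.subset_univ P)⟩
      · intro P hP Q hQ heq
        simp only [Prod.mk.injEq] at heq
        obtain ⟨h1, h2, h3⟩ := heq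
        ext x
        have tri : pY x ∨ pZ x ∨ pE x := by
          simp only [hpY, hpZ, hpE]
          have := x.isLt
          omega
        have key : ∀ (R : Finset (Fin n)) (p : Fin n → Prop) [DecidablePred p],
            p x → (x ∈ R ↔ x ∈ R.filter p) := by
          intro R p _ hp
          simp [Finset.mem_filter, hp]
        rcases tri with h | h | h
        · rw [key P pY h, key Q pY h, h1]
        · rw [key P pZ h, key Q pZ h, h2]
        · rw [key P pE h, key Q pE h, h3]
    refine hle.trans ?_
    rw [hT, Finset.card_product, Finset.card_product, Finset.card_powersetCard,
      Finset.card_powerset, hYcard, hEcard]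
    norm_num
  -- combine with partial-sum bound
  have hSbound : ∀ a ∈ Finset.range m,
      ((Finset.univ.filter pZ).powerset.filter fun C => C.card ≤ m-1-a).card * 4
        ≤ 5 * M.choose (m-1-a) := by
    intro a ha
    have h18 := powerset_card_le_bound (Finset.univ.filter pZ) hs hm hZcard (m-1-a) (by omega)
    have : 18 * (((Finset.univ.filter pZ).powerset.filter fun C => C.card ≤ m-1-a).card * 4)
        ≤ 18 * (5 * M.choose (m-1-a)) := by
      calc 18 * (((Finset.univ.filter pZ).powerset.filter fun C => C.card ≤ m-1-a).card * 4)
          = (18 * ((Finset.univ.filter pZ).powerset.filter fun C => C.card ≤ m-1-a).card) * 4 := by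
            ring
        _ ≤ (19 * M.choose (m-1-a)) * 4 := Nat.mul_le_mul_right _ h18
        _ ≤ 18 * (5 * M.choose (m-1-a)) := by
            have : (19 * M.choose (m-1-a)) * 4 = 76 * M.choose (m-1-a) := by ring
            rw [this]
            have : 18 * (5 * M.choose (m-1-a)) = 90 * M.choose (m-1-a) := by ring
            rw [this]
            exact Nat.mul_le_mul_right _ (by omega)
    exact Nat.le_of_mul_le_mul_left this (by omega)
  have hDsum : D.card ≤ ∑ a ∈ Finset.range m, (s-2).choose a * (5 * M.choose (m-1-a)) := by
    rw [hfiber]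
    apply Finset.sum_le_sum
    intro a ha
    exact (hfibBound a ha).trans (Nat.mul_le_mul_left _ (hSbound a ha))
  -- multiply by (s-1)^(s-2)
  have hperterm : ∀ a ∈ Finset.range m,
      (s-2).choose a * (5 * M.choose (m-1-a)) * (s-1)^(s-2)
        ≤ 5 * M.choose (m-1) * ((s-1)^(s-2-a) * (s-2).choose a) := by
    intro a ha
    rw [Finset.mem_range] at ha
    rcases le_or_gt a (s-2) with hcase | hcase
    · have hsplit : (s-1)^(s-2) = (s-1)^(s-2-a) * (s-1)^a := by
        rw [← pow_add]; congr 1; omega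
      have hr := ratio_pow hs hm a (by omega)
      calc (s-2).choose a * (5 * M.choose (m-1-a)) * (s-1)^(s-2)
          = 5 * ((s-1)^a * M.choose (m-1-a)) * ((s-1)^(s-2-a) * (s-2).choose a) := by
            rw [hsplit]; ring
        _ ≤ 5 * M.choose (m-1) * ((s-1)^(s-2-a) * (s-2).choose a) := by
            apply Nat.mul_le_mul_right
            exact Nat.mul_le_mul_left _ hr
    · rw [Nat.choose_eq_zero_of_lt hcase]
      simp
  have hbinom : ∑ a ∈ Finset.range m, (s-1)^(s-2-a) * (s-2).choose a ≤ s^(s-2) := by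
    have hbig : ∑ a ∈ Finset.range m, (s-1)^(s-2-a) * (s-2).choose a
        ≤ ∑ a ∈ Finset.range (m+s), (s-1)^(s-2-a) * (s-2).choose a := by
      apply Finset.sum_le_sum_of_subset
      apply Finset.range_subset_range.mpr; omega
    have heq : ∑ a ∈ Finset.range (m+s), (s-1)^(s-2-a) * (s-2).choose a
        = ∑ a ∈ Finset.range (s-1), (s-1)^(s-2-a) * (s-2).choose a := by
      symm
      apply Finset.sum_subset
      · apply Finset.range_subset_range.mpr; omega
      · intro a _ ha2
        rw [Finset.mem_range, not_lt] at ha2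
        rw [Nat.choose_eq_zero_of_lt (by omega)]
        simp
    have hpow : ∑ a ∈ Finset.range (s-1), (s-1)^(s-2-a) * (s-2).choose a = s^(s-2) := by
      have h := add_pow (1 : ℕ) (s-1) (s-2)
      have h1 : (1 + (s-1) : ℕ) = s := by omega
      rw [h1] at h
      have h2 : s - 2 + 1 = s - 1 := by omega
      rw [h2] at h
      rw [h]
      apply Finset.sum_congr rfl
      intro a _
      simp [Nat.mul_comm]
    rw [heq] at hbig
    rw [hpow] at hbig
    exact hbig
  -- final chain
  have hchain : D.card * (s-1)^(s-2) ≤ 5 * M.choose (m-1) * s^(s-2) := by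
    calc D.card * (s-1)^(s-2)
        ≤ (∑ a ∈ Finset.range m, (s-2).choose a * (5 * M.choose (m-1-a))) * (s-1)^(s-2) :=
          Nat.mul_le_mul_right _ hDsum
      _ = ∑ a ∈ Finset.range m, (s-2).choose a * (5 * M.choose (m-1-a)) * (s-1)^(s-2) := by
          rw [Finset.sum_mul]
      _ ≤ ∑ a ∈ Finset.range m, 5 * M.choose (m-1) * ((s-1)^(s-2-a) * (s-2).choose a) :=
          Finset.sum_le_sum hperterm
      _ = 5 * M.choose (m-1) * ∑ a ∈ Finset.range m, (s-1)^(s-2-a) * (s-2).choose a := by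
          rw [Finset.mul_sum]
      _ ≤ 5 * M.choose (m-1) * s^(s-2) := Nat.mul_le_mul_left _ hbinom
  have hMm : m ≤ M := by omega

  have hCpos : 0 < M.choose (m-1) := Nat.choose_pos (by omega)
  have h3 : s^(s-2) < 3 * (s-1)^(s-2) := by
    have := succ_pow_lt_three_mul (s-1) (s-2) (by omega) (by omega)
    have h1 : s - 1 + 1 = s := by omega
    rwa [h1] at this
  have h15 : 15 * M.choose (m-1) ≤ M.choose m := by
    have h := Nat.choose_succ_right_eq M (m-1)
    have h1 : m - 1 + 1 = m := by omega
    rw [h1] at h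
    have hms : s*(m-1) + s = s*m := by
      have e1 : s*((m-1)+1) = s*(m-1) + s := by ring
      rw [h1] at e1; omega
    have h20 : 20*(m-1) ≤ s*(m-1) := Nat.mul_le_mul_right _ hs
    have hMm1 : 15 * m ≤ M - (m-1) := by omega
    have : M.choose (m-1) * (15 * m) ≤ M.choose (m-1) * (M - (m-1)) :=
      Nat.mul_le_mul_left _ hMm1
    rw [← h] at this
    have h2 : M.choose (m-1) * (15 * m) = (15 * M.choose (m-1)) * m := by ring
    rw [h2] at this
    exact Nat.le_of_mul_le_mul_right this (by omega)
  have hfinal : D.card * (s-1)^(s-2) < M.choose m * (s-1)^(s-2) := by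
    calc D.card * (s-1)^(s-2) ≤ 5 * M.choose (m-1) * s^(s-2) := hchain
      _ < 5 * M.choose (m-1) * (3 * (s-1)^(s-2)) := by
          have hpos : 0 < 5 * M.choose (m-1) := Nat.mul_pos (by omega) hCpos
          exact (Nat.mul_lt_mul_left hpos).mpr h3
      _ = (15 * M.choose (m-1)) * (s-1)^(s-2) := by ring
      _ ≤ M.choose m * (s-1)^(s-2) := Nat.mul_le_mul_right _ h15
  exact Nat.lt_of_mul_lt_mul_right hfinal

lemma WP_card (s m : ℕ) (hs : 20 ≤ s) (hm : 20 ≤ m) :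
    ((Wfam (s*m+1) m s) \ (Pfam (s*m+1) m (s-1))).card = (s*m - s + 1).choose m := by
  have hsm : 400 ≤ s*m := Nat.mul_le_mul hs hm
  have hs' : 20*s ≤ s*m := by
    have := Nat.mul_le_mul_left s hm
    omega
  have hm' : 20*m ≤ s*m := Nat.mul_le_mul_right m hs
  set n := s*m+1 with hn
  set pZ : Fin n → Prop := fun x => s - 1 - 1 ≤ x.val ∧ x.val < s*m - 1 with hpZ
  have hZcard : (Finset.univ.filter pZ).card = s*m - s + 1 := by
    have h := card_filter_Ico n (s-1-1) (s*m-1) (by omega)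
    rw [hpZ] at *
    rw [h]; omega
  have hset : (Wfam n m s) \ (Pfam n m (s-1)) = (Finset.univ.filter pZ).powersetCard m := by
    ext W
    rw [Finset.mem_sdiff, Finset.mem_powersetCard]
    rw [Wfam, Pfam, Finset.mem_filter, Finset.mem_filter]
    simp only [Finset.mem_univ, true_and]
    constructor
    · rintro ⟨hW, hP⟩
      have hfsub : (W.filter fun x => x.val < s*m-1) ⊆ W := Finset.filter_subset _ _
      have hWm : m ≤ W.card := hW.trans (Finset.card_le_card hfsub)
      have hP' : W.card + (W.filter fun x => x.val < s-1-1).card ≤ m := by omega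
      have hWcard : W.card = m := by omega
      have hY0 : (W.filter fun x => x.val < s-1-1) = ∅ := by
        rw [← Finset.card_eq_zero]; omega
      have hfull : (W.filter fun x => x.val < s*m-1) = W :=
        Finset.eq_of_subset_of_card_le hfsub (by omega)
      refine ⟨?_, hWcard⟩
      intro x hx
      rw [Finset.mem_filter]
      refine ⟨Finset.mem_univ x, ?_, ?_⟩
      · by_contra hcon
        have : x ∈ (W.filter fun x => x.val < s-1-1) := by
          rw [Finset.mem_filter]; exact ⟨hx, by omega⟩
        rw [hY0] at this
        exact absurd this (Finset.notMem_empty x)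
      · have : x ∈ (W.filter fun x => x.val < s*m-1) := hfull.symm ▸ hx
        rw [Finset.mem_filter] at this
        exact this.2
    · rintro ⟨hsub, hcard⟩
      have hall : ∀ x ∈ W, pZ x := by
        intro x hx
        have := hsub hx
        rw [Finset.mem_filter] at this
        exact this.2
      constructor
      · have : (W.filter fun x => x.val < s*m-1) = W := by
          apply Finset.filter_true_of_mem
          intro x hx; exact (hall x hx).2
        rw [this, hcard]
      · have hY0 : (W.filter fun x => x.val < s-1-1) = ∅ := by
          apply Finset.filter_false_of_mem
          intro x hx
          have := (hall x hx).1
          omega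
        rw [hY0]
        simp [hcard]
  rw [hset, Finset.card_powersetCard, hZcard]

lemma matching_exists (s m : ℕ) (hs : 20 ≤ s) (hm : 20 ≤ m) :
    HasMatching (Wfam (s*m+1) m s) (s-1) := by
  have hsm : 400 ≤ s*m := Nat.mul_le_mul hs hm
  have hs' : 20*s ≤ s*m := by have := Nat.mul_le_mul_left s hm; omega
  have hm' : 20*m ≤ s*m := Nat.mul_le_mul_right m hs
  set n := s*m+1 with hn
  set f : ℕ → Finset (Fin n) :=
    fun i => Finset.univ.filter fun x => i*m ≤ x.val ∧ x.val < i*m + m with hf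
  -- interval bounds
  have hbound : ∀ i < s-1, i*m + m ≤ s*m - m := by
    intro i hi
    have h1 : (i+1)*m ≤ (s-1)*m := Nat.mul_le_mul_right m (by omega)
    have h2 : (s-1)*m = s*m - m := by rw [Nat.sub_one_mul]
    have h3 : (i+1)*m = i*m + m := by ring
    omega
  have hcardf : ∀ i < s-1, (f i).card = m := by
    intro i hi
    have := card_filter_Ico n (i*m) (i*m+m) (by have := hbound i hi; omega)
    simp only [hf]
    omega
  have hmemf : ∀ i < s-1, f i ∈ Wfam n m s := by
    intro i hi
    rw [Wfam, Finset.mem_filter]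
    refine ⟨Finset.mem_univ _, ?_⟩
    have hfull : ((f i).filter fun x => x.val < s*m-1) = f i := by
      apply Finset.filter_true_of_mem
      intro x hx
      rw [hf, Finset.mem_filter] at hx
      have := hbound i hi
      omega
    rw [hfull, hcardf i hi]
  have hdisjf : ∀ i j, i ≠ j → Disjoint (f i) (f j) := by
    intro i j hij
    rw [Finset.disjoint_left]
    intro x hxi hxj
    rw [hf, Finset.mem_filter] at hxi hxj
    rcases Nat.lt_or_ge i j with h | h
    · have : (i+1)*m ≤ j*m := Nat.mul_le_mul_right m (by omega)
      have h3 : (i+1)*m = i*m + m := by ring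
      omega
    · have hji : j < i := by omega
      have : (j+1)*m ≤ i*m := Nat.mul_le_mul_right m (by omega)
      have h3 : (j+1)*m = j*m + m := by ring
      omega
  refine ⟨(Finset.range (s-1)).image f, ?_, ?_, ?_⟩
  · intro A hA
    rw [Finset.mem_image] at hA
    obtain ⟨i, hi, rfl⟩ := hA
    rw [Finset.mem_range] at hi
    exact hmemf i hi
  · rw [Finset.card_image_of_injOn, Finset.card_range]
    intro i hi j hj hfij
    rw [Finset.mem_coe, Finset.mem_range] at hi hj
    by_contra hne
    have := hdisjf i j hne
    rw [hfij] at this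
    have hempty : f j = ∅ := by
      rw [← Finset.bot_eq_empty, ← disjoint_self]
      exact this
    have := hcardf j hj
    rw [hempty] at this
    simp at this
    omega
  · intro A hA B hB hAB
    rw [Finset.mem_coe, Finset.mem_image] at hA hB
    obtain ⟨i, hi, rfl⟩ := hA
    obtain ⟨j, hj, rfl⟩ := hB
    have hne : i ≠ j := fun h => hAB (by rw [h])
    exact hdisjf i j hne

lemma matching_not_exists (s m : ℕ) (hs : 20 ≤ s) (hm : 20 ≤ m) :
    ¬ HasMatching (Wfam (s*m+1) m s) s := by
  have hsm : 400 ≤ s*m := Nat.mul_le_mul hs hm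
  set n := s*m+1 with hn
  rintro ⟨𝒜, hsub, hcard, hpw⟩
  set px : Fin n → Prop := fun x => x.val < s*m - 1 with hpx
  have hXcard : (Finset.univ.filter px).card = s*m - 1 := by
    have h := card_filter_Ico n 0 (s*m-1) (by omega)
    have heq : (Finset.univ.filter fun x : Fin n => 0 ≤ x.val ∧ x.val < s*m-1)
        = Finset.univ.filter px := by
      apply Finset.filter_congr; intro x _; simp [hpx]
    rw [heq] at h
    omega
  have hdisj : ∀ A ∈ 𝒜, ∀ B ∈ 𝒜, A ≠ B → Disjoint (A.filter px) (B.filter px) := by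
    intro A hA B hB hne
    have hd := hpw (Finset.mem_coe.mpr hA) (Finset.mem_coe.mpr hB) hne
    exact Disjoint.mono (Finset.filter_subset px A) (Finset.filter_subset px B) hd
  have hbu : (𝒜.biUnion fun A => A.filter px).card = ∑ A ∈ 𝒜, (A.filter px).card :=
    Finset.card_biUnion hdisj
  have hsum : s*m ≤ ∑ A ∈ 𝒜, (A.filter px).card := by
    have hper : ∀ A ∈ 𝒜, m ≤ (A.filter px).card := by
      intro A hA
      have := hsub hA
      rw [Wfam, Finset.mem_filter] at this
      exact this.2
    calc s*m = 𝒜.card * m := by rw [hcard]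
      _ = ∑ _A ∈ 𝒜, m := by rw [Finset.sum_const, smul_eq_mul]
      _ ≤ ∑ A ∈ 𝒜, (A.filter px).card := Finset.sum_le_sum hper
  have hle : (𝒜.biUnion fun A => A.filter px).card ≤ (Finset.univ.filter px).card := by
    apply Finset.card_le_card
    intro x hx
    rw [Finset.mem_biUnion] at hx
    obtain ⟨A, _, hxA⟩ := hx
    rw [Finset.mem_filter] at hxA ⊢
    exact ⟨Finset.mem_univ x, hxA.2⟩
  omega

theorem stmt18 (s m n : ℕ) (hs : 20 ≤ s) (hm : 20 ≤ m) (hn : n = s * m + 1) :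
    (HasMatching (Wfam n m s) (s - 1) ∧ ¬ HasMatching (Wfam n m s) s)
      ∧ (Pfam n m (s - 1)).card < (Wfam n m s).card := by
  subst hn
  refine ⟨⟨matching_exists s m hs hm, matching_not_exists s m hs hm⟩, ?_⟩
  have h1 := Finset.card_sdiff_add_card_inter (Pfam (s*m+1) m (s-1)) (Wfam (s*m+1) m s)
  have h2 := Finset.card_sdiff_add_card_inter (Wfam (s*m+1) m s) (Pfam (s*m+1) m (s-1))
  have h3 : ((Pfam (s*m+1) m (s-1)) ∩ (Wfam (s*m+1) m s)).card
      = ((Wfam (s*m+1) m s) ∩ (Pfam (s*m+1) m (s-1))).card := by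
    rw [Finset.inter_comm]
  have h4 := PW_card_lt s m hs hm
  have h5 := WP_card s m hs hm
  omega
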